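/- Let τ_1 : S_{n_1}(ℂ) → S_{m_1}(ℂ) and τ_2 : S_{n_2}(ℂ) → S_{m_2}(ℂ) be quantum channels and let τ_1 ⊗ τ_2 : S_{n_1 n_2}(ℂ) → S_{m_1 m_2}(ℂ) be their tensor product channel. Then σ_1(τ_1 ⊗ τ_2) = σ_1(τ_1) · σ_1(τ_2); equivalently, log‖τ_1 ⊗ τ_2‖ = log‖τ_1‖ + log‖τ_2‖. -/

import Mathlib

open scoped ComplexOrder
open Matrix Kronecker

/-- Frobenius norm of a complex matrix: `√(tr (X Xᴴ))`. -/
noncomputable def frobNorm {n m : Type*} [Fintype n] [Fintype m]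
    (X : Matrix n m ℂ) : ℝ :=
  Real.sqrt ((X * Xᴴ).trace.re)

/-- Operator norm `σ₁(τ) = ‖τ‖` of a map between spaces of Hermitian matrices,
with respect to the Frobenius norm. -/
noncomputable def opNorm {n m : Type*} [Fintype n] [Fintype m]
    (τ : Matrix n n ℂ → Matrix m m ℂ) : ℝ :=
  sSup {c : ℝ | ∃ X : Matrix n n ℂ, X.IsHermitian ∧ frobNorm X ≤ 1 ∧ c = frobNorm (τ X)}

/-- The second singular value of a map between spaces of Hermitian matrices, via the
Courant–Fischer min-max characterization: the infimum over nonzero Hermitian `U` of the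
norm of `τ` restricted to the orthogonal complement of `U`. -/
noncomputable def sigma2 {n m : Type*} [Fintype n] [Fintype m]
    (τ : Matrix n n ℂ → Matrix m m ℂ) : ℝ :=
  sInf {c : ℝ | ∃ U : Matrix n n ℂ, U.IsHermitian ∧ U ≠ 0 ∧
    c = sSup {d : ℝ | ∃ X : Matrix n n ℂ, X.IsHermitian ∧ frobNorm X ≤ 1 ∧
      (U * X).trace.re = 0 ∧ d = frobNorm (τ X)}}

/-- Largest eigenvalue `λ₁` of a Hermitian matrix (junk value `0` otherwise). -/
noncomputable def lambdaMax {n : Type*} [Fintype n] [DecidableEq n]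
    (Y : Matrix n n ℂ) : ℝ :=
  if hY : Y.IsHermitian then ⨆ i, hY.eigenvalues i else 0

/-- von Neumann entropy `H(Y) = -∑ λᵢ log λᵢ` of a Hermitian matrix
(junk value `0` otherwise); note `Real.log 0 = 0`. -/
noncomputable def entropy {n : Type*} [Fintype n] [DecidableEq n]
    (Y : Matrix n n ℂ) : ℝ :=
  if hY : Y.IsHermitian then -∑ i, hY.eigenvalues i * Real.log (hY.eigenvalues i) else 0

/-- Minimum output entropy of a channel: the infimum of `H(τ X)` over density matrices `X`. -/
noncomputable def minEntropy {n m : Type*} [Fintype n] [DecidableEq n] [Fintype m] [DecidableEq m]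
    (τ : Matrix n n ℂ → Matrix m m ℂ) : ℝ :=
  sInf {h : ℝ | ∃ X : Matrix n n ℂ, X.PosSemidef ∧ X.trace = 1 ∧ h = entropy (τ X)}

/-- Eigenvalues of a Hermitian matrix arranged in decreasing order:
`eigsDesc Y 0 = λ₁ ≥ eigsDesc Y 1 = λ₂ ≥ …` (junk value `0` if not Hermitian). -/
noncomputable def eigsDesc {n : ℕ} (Y : Matrix (Fin n) (Fin n) ℂ) : Fin n → ℝ :=
  if hY : Y.IsHermitian then fun i => hY.eigenvalues (Tuple.sort hY.eigenvalues i.rev)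
  else fun _ => 0

/-- The sum `λ₁ + ⋯ + λ_k` of the `k` largest eigenvalues of a Hermitian matrix. -/
noncomputable def sumTopEigs {n : ℕ} (k : ℕ) (Y : Matrix (Fin n) (Fin n) ℂ) : ℝ :=
  ∑ i : Fin n, if (i : ℕ) < k then eigsDesc Y i else 0


/- ================= auxiliary development ================= -/
section stmtSevenAux
attribute [local instance] Matrix.frobeniusSeminormedAddCommGroup
  Matrix.frobeniusNormedAddCommGroup Matrix.frobeniusNormedSpace
set_option linter.unusedSectionVars false

variable {n m p q n' m' : Type*} [Fintype n] [Fintype m] [Fintype p] [Fintype q]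
  [Fintype n'] [Fintype m'] {ι ι' : Type*} [Fintype ι] [Fintype ι']

noncomputable def uF (X : Matrix n m ℂ) : ℝ := ((X * Xᴴ).trace.re)

lemma uF_eq_sum (X : Matrix n m ℂ) : uF X = ∑ i, ∑ j, Complex.normSq (X i j) := by
  simp only [uF, Matrix.trace, Matrix.diag, Matrix.mul_apply, Matrix.conjTranspose_apply]
  rw [Complex.re_sum]
  congr 1; ext i
  rw [Complex.re_sum]
  congr 1; ext j
  rw [show star (X i j) = starRingEnd ℂ (X i j) from rfl, Complex.mul_conj]
  simp

lemma uF_nonneg (X : Matrix n m ℂ) : 0 ≤ uF X := by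
  rw [uF_eq_sum]
  exact Finset.sum_nonneg fun i _ => Finset.sum_nonneg fun j _ => Complex.normSq_nonneg _

lemma uF_eq_zero {X : Matrix n m ℂ} (h : uF X = 0) : X = 0 := by
  rw [uF_eq_sum] at h
  ext i j
  have h1 : ∀ i ∈ Finset.univ, (0:ℝ) ≤ ∑ j, Complex.normSq (X i j) := by
    intro i _; exact Finset.sum_nonneg fun j _ => Complex.normSq_nonneg _
  have := (Finset.sum_eq_zero_iff_of_nonneg h1).mp h i (Finset.mem_univ i)
  have h2 : ∀ j ∈ Finset.univ, (0:ℝ) ≤ Complex.normSq (X i j) := fun j _ => Complex.normSq_nonneg _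
  have := (Finset.sum_eq_zero_iff_of_nonneg h2).mp this j (Finset.mem_univ j)
  simpa using Complex.normSq_eq_zero.mp this

lemma uF_eq_sq_norm (X : Matrix n m ℂ) : uF X = ‖X‖ ^ 2 := by
  rw [Matrix.frobenius_norm_def, ← Real.rpow_natCast (_ ^ (1/2:ℝ)) 2, ← Real.rpow_mul (by positivity)]
  norm_num
  rw [uF_eq_sum]
  congr 1; ext i; congr 1; ext j
  exact (Complex.sq_norm _).symm

lemma frobNorm_eq_norm' (X : Matrix n m ℂ) : Real.sqrt (uF X) = ‖X‖ := by
  rw [uF_eq_sq_norm, Real.sqrt_sq (norm_nonneg _)]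

lemma frobNorm_eq (X : Matrix n m ℂ) : frobNorm X = ‖X‖ := frobNorm_eq_norm' X


variable {ι : Type*} [Fintype ι]

noncomputable def kchan (C : ι → Matrix m n ℂ) : Matrix n n ℂ → Matrix m m ℂ :=
  fun X => ∑ i, C i * X * (C i)ᴴ

lemma kchan_add (C : ι → Matrix m n ℂ) (X Y : Matrix n n ℂ) :
    kchan C (X + Y) = kchan C X + kchan C Y := by
  simp [kchan, Matrix.mul_add, Matrix.add_mul, Finset.sum_add_distrib]

lemma kchan_smul (C : ι → Matrix m n ℂ) (c : ℂ) (X : Matrix n n ℂ) :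
    kchan C (c • X) = c • kchan C X := by
  simp [kchan, Matrix.mul_smul, Matrix.smul_mul, Finset.smul_sum]

lemma kchan_rsmul (C : ι → Matrix m n ℂ) (c : ℝ) (X : Matrix n n ℂ) :
    kchan C (c • X) = c • kchan C X := by
  have h : ∀ (M : Matrix n n ℂ), c • M = (c:ℂ) • M := fun M => by
    ext i j; simp
  have h2 : ∀ (M : Matrix m m ℂ), c • M = (c:ℂ) • M := fun M => by
    ext i j; simp
  rw [h, h2, kchan_smul]

/-- kchan as a real-linear map. -/
noncomputable def kchanL (C : ι → Matrix m n ℂ) : Matrix n n ℂ →L[ℝ] Matrix m m ℂ :=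
  LinearMap.toContinuousLinearMap
    { toFun := kchan C
      map_add' := kchan_add C
      map_smul' := kchan_rsmul C }

lemma kchanL_apply (C : ι → Matrix m n ℂ) (X : Matrix n n ℂ) : kchanL C X = kchan C X := rfl

lemma kchan_zero (C : ι → Matrix m n ℂ) : kchan C 0 = 0 := by simp [kchan]

lemma opNormSet_nonempty (C : ι → Matrix m n ℂ) :
    (0:ℝ) ∈ {c : ℝ | ∃ X : Matrix n n ℂ, X.IsHermitian ∧ frobNorm X ≤ 1 ∧ c = frobNorm (kchan C X)} := by
  refine ⟨0, Matrix.isHermitian_zero, ?_, ?_⟩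
  · rw [frobNorm_eq]; simp
  · rw [kchan_zero, frobNorm_eq]; simp

lemma opNormSet_bdd (C : ι → Matrix m n ℂ) :
    BddAbove {c : ℝ | ∃ X : Matrix n n ℂ, X.IsHermitian ∧ frobNorm X ≤ 1 ∧ c = frobNorm (kchan C X)} := by
  obtain ⟨K, hK0, hK⟩ := SemilinearMapClass.bound_of_continuous (kchanL C).toLinearMap
    (LinearMap.continuous_of_finiteDimensional _)
  refine ⟨K, ?_⟩
  rintro c ⟨X, hX, hXle, rfl⟩
  rw [frobNorm_eq] at hXle ⊢
  calc ‖kchan C X‖ = ‖(kchanL C).toLinearMap X‖ := rfl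
    _ ≤ K * ‖X‖ := hK X
    _ ≤ K * 1 := by
        exact mul_le_mul_of_nonneg_left hXle hK0.le
    _ = K := mul_one _

lemma opNorm_nonneg (C : ι → Matrix m n ℂ) : 0 ≤ opNorm (kchan C) :=
  le_csSup (opNormSet_bdd C) (opNormSet_nonempty C)

lemma kchan_herm (C : ι → Matrix m n ℂ) {X : Matrix n n ℂ} (hX : X.IsHermitian) :
    (kchan C X).IsHermitian := by
  unfold kchan
  rw [Matrix.IsHermitian, Matrix.conjTranspose_sum]
  congr 1; ext i
  rw [Matrix.conjTranspose_mul, Matrix.conjTranspose_mul, Matrix.conjTranspose_conjTranspose,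
    hX.eq, Matrix.mul_assoc]

lemma herm_rsmul {X : Matrix n n ℂ} (hX : X.IsHermitian) (r : ℝ) : (r • X).IsHermitian := by
  show (r • X)ᴴ = r • X
  ext i j
  simp [Matrix.conjTranspose_apply, hX.apply]

/-- Key bound for Hermitian inputs. -/
lemma kchan_bound_herm (C : ι → Matrix m n ℂ) {X : Matrix n n ℂ} (hX : X.IsHermitian) :
    ‖kchan C X‖ ≤ opNorm (kchan C) * ‖X‖ := by
  rcases eq_or_ne ‖X‖ 0 with h0 | h0
  · have hz : uF X = 0 := by rw [uF_eq_sq_norm, h0]; ring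
    have hX0 : X = 0 := uF_eq_zero hz
    subst hX0
    rw [kchan_zero, h0, mul_zero, norm_zero]
  · have hpos : 0 < ‖X‖ := lt_of_le_of_ne (norm_nonneg X) (Ne.symm h0)
    set t : ℝ := ‖X‖
    have hmem : frobNorm (kchan C (t⁻¹ • X)) ∈
        {c : ℝ | ∃ Y : Matrix n n ℂ, Y.IsHermitian ∧ frobNorm Y ≤ 1 ∧ c = frobNorm (kchan C Y)} := by
      refine ⟨t⁻¹ • X, ?_, ?_, rfl⟩
      · exact herm_rsmul hX _
      · rw [frobNorm_eq, norm_smul]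
        rw [Real.norm_eq_abs, abs_inv, abs_of_pos hpos, inv_mul_cancel₀ (ne_of_gt hpos)]
    have hle := le_csSup (opNormSet_bdd C) hmem
    rw [frobNorm_eq, kchan_rsmul, norm_smul] at hle
    have : ‖kchan C X‖ = t * (‖(t⁻¹:ℝ)‖ * ‖kchan C X‖) := by
      rw [Real.norm_eq_abs, abs_of_pos (inv_pos.mpr hpos)]
      field_simp
    rw [this]
    calc t * (‖(t⁻¹:ℝ)‖ * ‖kchan C X‖) ≤ t * opNorm (kchan C) :=
        mul_le_mul_of_nonneg_left hle (le_of_lt hpos)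
      _ = opNorm (kchan C) * t := mul_comm _ _

lemma uF_pyth {P Q : Matrix m m ℂ} (hP : P.IsHermitian) (hQ : Q.IsHermitian) :
    uF (P + Complex.I • Q) = uF P + uF Q := by
  unfold uF
  have h1 : (P + Complex.I • Q)ᴴ = P - Complex.I • Q := by
    rw [Matrix.conjTranspose_add, Matrix.conjTranspose_smul, hP.eq, hQ.eq]
    simp [Complex.star_def, Complex.conj_I, sub_eq_add_neg]
  have h2 : (P + Complex.I • Q) * (P - Complex.I • Q) =
      P * P + Q * Q + (Complex.I • (Q * P) - Complex.I • (P * Q)) := by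
    rw [Matrix.mul_sub, Matrix.add_mul, Matrix.add_mul]
    simp only [Matrix.smul_mul, Matrix.mul_smul, smul_smul, Complex.I_mul_I, neg_one_smul]
    abel
  rw [h1, h2, hP.eq, hQ.eq]
  rw [Matrix.trace_add, Matrix.trace_sub, Matrix.trace_smul, Matrix.trace_smul,
    Matrix.trace_mul_comm Q P, Matrix.trace_add]
  simp

lemma herm_parts (Z : Matrix n n ℂ) :
    ∃ H K : Matrix n n ℂ, H.IsHermitian ∧ K.IsHermitian ∧ Z = H + Complex.I • K := by
  refine ⟨(1/2 : ℂ) • (Z + Zᴴ), (-(Complex.I)/2) • (Z - Zᴴ), ?_, ?_, ?_⟩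
  · show _ = _
    ext i j
    simp only [Matrix.conjTranspose_apply, Matrix.smul_apply, Matrix.add_apply, smul_eq_mul,
      star_mul', star_add, star_star, Complex.star_def, map_div₀, _root_.map_one, map_ofNat, Complex.conj_conj]
    ring
  · show _ = _
    ext i j
    simp only [Matrix.conjTranspose_apply, Matrix.smul_apply, Matrix.sub_apply, smul_eq_mul,
      star_mul', star_sub, star_star, Complex.star_def, _root_.map_mul, map_sub, Complex.conj_conj, map_div₀, map_neg,
      Complex.conj_I, map_ofNat]
    ring
  · ext i j
    simp only [Matrix.add_apply, Matrix.smul_apply, Matrix.conjTranspose_apply, Matrix.sub_apply,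
      smul_eq_mul]
    set a := Z i j; set b := star (Z j i)
    linear_combination ((a - b)/2) * Complex.I_sq

lemma uF_parts {Z H K : Matrix n n ℂ} (hH : H.IsHermitian) (hK : K.IsHermitian)
    (hZ : Z = H + Complex.I • K) : uF Z = uF H + uF K := by
  rw [hZ, uF_pyth hH hK]

lemma uF_kchan_le (C : ι → Matrix m n ℂ) (Z : Matrix n n ℂ) :
    uF (kchan C Z) ≤ (opNorm (kchan C))^2 * uF Z := by
  obtain ⟨H, K, hH, hK, rfl⟩ := herm_parts Z
  rw [kchan_add, kchan_smul, uF_pyth hH hK,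
    uF_pyth (kchan_herm C hH) (kchan_herm C hK)]
  have bH : uF (kchan C H) ≤ (opNorm (kchan C))^2 * uF H := by
    rw [uF_eq_sq_norm, uF_eq_sq_norm, ← mul_pow]
    exact pow_le_pow_left₀ (norm_nonneg _) (kchan_bound_herm C hH) 2
  have bK : uF (kchan C K) ≤ (opNorm (kchan C))^2 * uF K := by
    rw [uF_eq_sq_norm, uF_eq_sq_norm, ← mul_pow]
    exact pow_le_pow_left₀ (norm_nonneg _) (kchan_bound_herm C hK) 2
  calc uF (kchan C H) + uF (kchan C K) ≤ _ + _ := add_le_add bH bK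
    _ = (opNorm (kchan C))^2 * (uF H + uF K) := by ring

section blocks
variable [DecidableEq q]
def blockL (Z : Matrix (n × q) (p × q) ℂ) (a b : q) : Matrix n p ℂ :=
  Matrix.of fun k l => Z (k, a) (l, b)

def blockR (Z : Matrix (q × n) (q × p) ℂ) (a b : q) : Matrix n p ℂ :=
  Matrix.of fun k l => Z (a, k) (b, l)

lemma sum4_comm {α β γ δ : Type*} [Fintype α] [Fintype β] [Fintype γ] [Fintype δ]
    (f : α → β → γ → δ → ℝ) :
    ∑ k, ∑ a, ∑ l, ∑ b, f k a l b = ∑ a, ∑ b, ∑ k, ∑ l, f k a l b :=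
  calc ∑ k, ∑ a, ∑ l, ∑ b, f k a l b
      = ∑ a, ∑ k, ∑ l, ∑ b, f k a l b := Finset.sum_comm
    _ = ∑ a, ∑ k, ∑ b, ∑ l, f k a l b := Finset.sum_congr rfl fun _ _ =>
        Finset.sum_congr rfl fun _ _ => Finset.sum_comm
    _ = ∑ a, ∑ b, ∑ k, ∑ l, f k a l b := Finset.sum_congr rfl fun _ _ => Finset.sum_comm

lemma uF_blocksL (Z : Matrix (n × q) (p × q) ℂ) :
    uF Z = ∑ a, ∑ b, uF (blockL Z a b) := by
  rw [uF_eq_sum]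
  simp only [Fintype.sum_prod_type, uF_eq_sum, blockL, Matrix.of_apply]
  exact sum4_comm _

lemma uF_blocksR (Z : Matrix (q × n) (q × p) ℂ) :
    uF Z = ∑ a, ∑ b, uF (blockR Z a b) := by
  rw [uF_eq_sum]
  simp only [Fintype.sum_prod_type, uF_eq_sum, blockR, Matrix.of_apply]
  exact Finset.sum_congr rfl fun _ _ => Finset.sum_comm

lemma entryL (C : Matrix m n ℂ) (Z : Matrix (n × q) (n × q) ℂ) (x y : m) (a b : q) :
    ((C ⊗ₖ (1 : Matrix q q ℂ)) * Z * (C ⊗ₖ (1 : Matrix q q ℂ))ᴴ) (x, a) (y, b) =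
      (C * blockL Z a b * Cᴴ) x y := by
  simp only [Matrix.mul_apply, Fintype.sum_prod_type, Matrix.kronecker_apply,
    Matrix.conjTranspose_apply, Matrix.one_apply, blockL, Matrix.of_apply, mul_ite, ite_mul,
    mul_one, mul_zero, zero_mul, one_mul, Finset.sum_ite_eq, Finset.sum_ite_eq',
    Finset.mem_univ, if_true, star_mul', star_one]
  simp [apply_ite (starRingEnd ℂ), mul_ite, ite_mul, mul_zero, zero_mul, Finset.sum_ite_eq, Finset.sum_ite_eq']


lemma entryR (C : Matrix m n ℂ) (Z : Matrix (q × n) (q × n) ℂ) (x y : m) (a b : q) :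
    (((1 : Matrix q q ℂ) ⊗ₖ C) * Z * ((1 : Matrix q q ℂ) ⊗ₖ C)ᴴ) (a, x) (b, y) =
      (C * blockR Z a b * Cᴴ) x y := by
  simp only [Matrix.mul_apply, Fintype.sum_prod_type, Matrix.kronecker_apply,
    Matrix.conjTranspose_apply, Matrix.one_apply, blockR, Matrix.of_apply, mul_ite, ite_mul,
    mul_one, mul_zero, zero_mul, one_mul, Finset.sum_ite_eq, Finset.sum_ite_eq',
    Finset.mem_univ, if_true, star_mul', star_one]
  simp [apply_ite (starRingEnd ℂ), mul_ite, ite_mul, mul_zero, zero_mul, Finset.sum_ite_eq, Finset.sum_ite_eq']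


lemma uF_left (C : ι → Matrix m n ℂ) (Z : Matrix (n × q) (n × q) ℂ) :
    uF (∑ i, (C i ⊗ₖ (1 : Matrix q q ℂ)) * Z * (C i ⊗ₖ (1 : Matrix q q ℂ))ᴴ) ≤
      (opNorm (kchan C))^2 * uF Z := by
  have hent : ∀ a b, blockL (∑ i, (C i ⊗ₖ (1 : Matrix q q ℂ)) * Z * (C i ⊗ₖ (1 : Matrix q q ℂ))ᴴ)
      a b = kchan C (blockL Z a b) := by
    intro a b
    ext x y
    simp only [blockL, Matrix.of_apply, kchan, Matrix.sum_apply]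
    exact Finset.sum_congr rfl fun i _ => entryL (C i) Z x y a b
  rw [uF_blocksL, uF_blocksL Z, Finset.mul_sum]
  refine Finset.sum_le_sum fun a _ => ?_
  rw [Finset.mul_sum]
  refine Finset.sum_le_sum fun b _ => ?_
  rw [hent]
  exact uF_kchan_le C _

lemma uF_right (C : ι → Matrix m n ℂ) (Z : Matrix (q × n) (q × n) ℂ) :
    uF (∑ i, ((1 : Matrix q q ℂ) ⊗ₖ C i) * Z * ((1 : Matrix q q ℂ) ⊗ₖ C i)ᴴ) ≤
      (opNorm (kchan C))^2 * uF Z := by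
  have hent : ∀ a b, blockR (∑ i, ((1 : Matrix q q ℂ) ⊗ₖ C i) * Z * ((1 : Matrix q q ℂ) ⊗ₖ C i)ᴴ)
      a b = kchan C (blockR Z a b) := by
    intro a b
    ext x y
    simp only [blockR, Matrix.of_apply, kchan, Matrix.sum_apply]
    exact Finset.sum_congr rfl fun i _ => entryR (C i) Z x y a b
  rw [uF_blocksR, uF_blocksR Z, Finset.mul_sum]
  refine Finset.sum_le_sum fun a _ => ?_
  rw [Finset.mul_sum]
  refine Finset.sum_le_sum fun b _ => ?_
  rw [hent]
  exact uF_kchan_le C _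

end blocks
lemma frobNorm_def' (X : Matrix n m ℂ) : frobNorm X = Real.sqrt (uF X) := rfl

lemma frobNorm_nonneg (X : Matrix n m ℂ) : 0 ≤ frobNorm X := Real.sqrt_nonneg _

lemma kron_conjTranspose (A : Matrix m n ℂ) (B : Matrix m' n' ℂ) :
    (A ⊗ₖ B)ᴴ = Aᴴ ⊗ₖ Bᴴ := by
  ext ⟨i, j⟩ ⟨k, l⟩
  simp [Matrix.conjTranspose_apply, Matrix.kronecker_apply, star_mul']

lemma kron_herm {X : Matrix n n ℂ} {Y : Matrix m m ℂ} (hX : X.IsHermitian)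
    (hY : Y.IsHermitian) : (X ⊗ₖ Y).IsHermitian := by
  show _ = _
  rw [kron_conjTranspose, hX.eq, hY.eq]

lemma uF_kron (X : Matrix n m ℂ) (Y : Matrix n' m' ℂ) :
    uF (X ⊗ₖ Y) = uF X * uF Y := by
  simp only [uF_eq_sum, Matrix.kronecker_apply, Fintype.sum_prod_type, Complex.normSq_mul]
  rw [Finset.sum_mul_sum]
  refine Finset.sum_congr rfl fun i _ => ?_
  refine Finset.sum_congr rfl fun a _ => ?_
  rw [Finset.sum_mul_sum]

lemma frobNorm_kron (X : Matrix n m ℂ) (Y : Matrix n' m' ℂ) :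
    frobNorm (X ⊗ₖ Y) = frobNorm X * frobNorm Y := by
  rw [frobNorm_def', frobNorm_def', frobNorm_def', uF_kron,
    Real.sqrt_mul (uF_nonneg X)]

lemma kchan_kron (A : ι → Matrix m n ℂ) (B : ι' → Matrix m' n' ℂ)
    (X : Matrix n n ℂ) (Y : Matrix n' n' ℂ) :
    kchan (fun p : ι × ι' => A p.1 ⊗ₖ B p.2) (X ⊗ₖ Y) = kchan A X ⊗ₖ kchan B Y := by
  unfold kchan
  have hterm : ∀ (i : ι) (j : ι'),
      (A i ⊗ₖ B j) * (X ⊗ₖ Y) * (A i ⊗ₖ B j)ᴴ = (A i * X * (A i)ᴴ) ⊗ₖ (B j * Y * (B j)ᴴ) := by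
    intro i j
    rw [kron_conjTranspose, Matrix.mul_kronecker_mul, Matrix.mul_kronecker_mul]
  rw [Fintype.sum_prod_type]
  simp only [hterm]
  ext ⟨x, u⟩ ⟨y, v⟩
  simp only [Matrix.sum_apply, Matrix.kronecker_apply, Finset.sum_mul_sum]

lemma opNorm_kron_ge (A : ι → Matrix m n ℂ) (B : ι' → Matrix m' n' ℂ) :
    opNorm (kchan A) * opNorm (kchan B) ≤
      opNorm (kchan (fun p : ι × ι' => A p.1 ⊗ₖ B p.2)) := by
  set S₁ := {c : ℝ | ∃ X : Matrix n n ℂ, X.IsHermitian ∧ frobNorm X ≤ 1 ∧ c = frobNorm (kchan A X)}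
  set S₂ := {c : ℝ | ∃ X : Matrix n' n' ℂ, X.IsHermitian ∧ frobNorm X ≤ 1 ∧
    c = frobNorm (kchan B X)}
  set M := opNorm (kchan (fun p : ι × ι' => A p.1 ⊗ₖ B p.2)) with hM
  have hM0 : 0 ≤ M := opNorm_nonneg _
  have key : ∀ c₁ ∈ S₁, ∀ c₂ ∈ S₂, c₁ * c₂ ≤ M := by
    rintro c₁ ⟨X₁, hX₁, hX₁le, rfl⟩ c₂ ⟨X₂, hX₂, hX₂le, rfl⟩
    refine le_csSup (opNormSet_bdd _) ?_
    refine ⟨X₁ ⊗ₖ X₂, kron_herm hX₁ hX₂, ?_, ?_⟩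
    · rw [frobNorm_kron]
      exact mul_le_one₀ hX₁le (frobNorm_nonneg _) hX₂le
    · rw [kchan_kron, frobNorm_kron]
  have h₁0 : ∀ c₁ ∈ S₁, 0 ≤ c₁ := by rintro c₁ ⟨X, _, _, rfl⟩; exact frobNorm_nonneg _
  have hN₂ : 0 ≤ opNorm (kchan B) := opNorm_nonneg _
  rcases eq_or_lt_of_le hN₂ with h2 | h2
  · rw [← h2, mul_zero]; exact hM0
  · have step : ∀ c₁ ∈ S₁, c₁ * opNorm (kchan B) ≤ M := by
      intro c₁ hc₁
      rcases eq_or_lt_of_le (h₁0 c₁ hc₁) with h1 | h1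
      · rw [← h1, zero_mul]; exact hM0
      · have : opNorm (kchan B) ≤ M / c₁ := by
          refine csSup_le ⟨0, opNormSet_nonempty B⟩ fun c₂ hc₂ => ?_
          rw [le_div_iff₀ h1]
          calc c₂ * c₁ = c₁ * c₂ := mul_comm _ _
            _ ≤ M := key c₁ hc₁ c₂ hc₂
        calc c₁ * opNorm (kchan B) ≤ c₁ * (M / c₁) :=
            mul_le_mul_of_nonneg_left this (le_of_lt h1)
          _ = M := by field_simp
    have : opNorm (kchan A) ≤ M / opNorm (kchan B) := by
      refine csSup_le ⟨0, opNormSet_nonempty A⟩ fun c₁ hc₁ => ?_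
      rw [le_div_iff₀ h2]
      exact step c₁ hc₁
    calc opNorm (kchan A) * opNorm (kchan B) ≤ M / opNorm (kchan B) * opNorm (kchan B) :=
        mul_le_mul_of_nonneg_right this hN₂
      _ = M := by field_simp

lemma opNorm_kron_le {n m n' m' : Type*} [Fintype n] [Fintype m] [Fintype n'] [Fintype m']
    [DecidableEq n] [DecidableEq m] [DecidableEq n'] [DecidableEq m']
    (A : ι → Matrix m n ℂ) (B : ι' → Matrix m' n' ℂ) :
    opNorm (kchan (fun p : ι × ι' => A p.1 ⊗ₖ B p.2)) ≤ opNorm (kchan A) * opNorm (kchan B) := by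
  refine csSup_le ⟨0, opNormSet_nonempty _⟩ ?_
  rintro c ⟨X, hX, hXle, rfl⟩
  have hfact : kchan (fun p : ι × ι' => A p.1 ⊗ₖ B p.2) X =
      ∑ i, (A i ⊗ₖ (1 : Matrix m' m' ℂ)) *
        (∑ j, ((1 : Matrix n n ℂ) ⊗ₖ B j) * X * ((1 : Matrix n n ℂ) ⊗ₖ B j)ᴴ) *
        (A i ⊗ₖ (1 : Matrix m' m' ℂ))ᴴ := by
    unfold kchan
    rw [Fintype.sum_prod_type]
    refine Finset.sum_congr rfl fun i _ => ?_
    rw [Matrix.mul_sum, Matrix.sum_mul]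
    refine Finset.sum_congr rfl fun j _ => ?_
    have hAB : A i ⊗ₖ B j = (A i ⊗ₖ (1 : Matrix m' m' ℂ)) * ((1 : Matrix n n ℂ) ⊗ₖ B j) := by
      rw [← Matrix.mul_kronecker_mul, Matrix.mul_one, Matrix.one_mul]
    show (A i ⊗ₖ B j) * X * (A i ⊗ₖ B j)ᴴ = _
    rw [hAB, Matrix.conjTranspose_mul]
    simp only [Matrix.mul_assoc]
  have hbound : uF (kchan (fun p : ι × ι' => A p.1 ⊗ₖ B p.2) X) ≤
      (opNorm (kchan A))^2 * ((opNorm (kchan B))^2 * uF X) := by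
    rw [hfact]
    calc uF _ ≤ (opNorm (kchan A))^2 *
          uF (∑ j, ((1 : Matrix n n ℂ) ⊗ₖ B j) * X * ((1 : Matrix n n ℂ) ⊗ₖ B j)ᴴ) :=
        uF_left A _
      _ ≤ (opNorm (kchan A))^2 * ((opNorm (kchan B))^2 * uF X) :=
        mul_le_mul_of_nonneg_left (uF_right B X) (sq_nonneg _)
  have hX1 : uF X ≤ 1 := by
    have := hXle
    rw [frobNorm_def'] at this
    calc uF X = Real.sqrt (uF X) ^ 2 := (Real.sq_sqrt (uF_nonneg X)).symm
      _ ≤ 1 ^ 2 := pow_le_pow_left₀ (Real.sqrt_nonneg _) this 2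
      _ = 1 := one_pow 2
  rw [frobNorm_def']
  have : uF (kchan (fun p : ι × ι' => A p.1 ⊗ₖ B p.2) X) ≤
      (opNorm (kchan A) * opNorm (kchan B))^2 := by
    calc _ ≤ (opNorm (kchan A))^2 * ((opNorm (kchan B))^2 * uF X) := hbound
      _ ≤ (opNorm (kchan A))^2 * ((opNorm (kchan B))^2 * 1) := by
          refine mul_le_mul_of_nonneg_left ?_ (sq_nonneg _)
          exact mul_le_mul_of_nonneg_left hX1 (sq_nonneg _)
      _ = (opNorm (kchan A) * opNorm (kchan B))^2 := by ring
  calc Real.sqrt _ ≤ Real.sqrt ((opNorm (kchan A) * opNorm (kchan B))^2) :=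
      Real.sqrt_le_sqrt this
    _ = opNorm (kchan A) * opNorm (kchan B) :=
      Real.sqrt_sq (mul_nonneg (opNorm_nonneg A) (opNorm_nonneg B))

end stmtSevenAux

/-- For quantum channels τ₁, τ₂, the operator norm is multiplicative
under tensor products: σ₁(τ₁ ⊗ τ₂) = σ₁(τ₁) · σ₁(τ₂). -/
theorem stmt_7 {n₁ m₁ n₂ m₂ l₁ l₂ : ℕ}
    (A₁ : Fin l₁ → Matrix (Fin m₁) (Fin n₁) ℂ)
    (A₂ : Fin l₂ → Matrix (Fin m₂) (Fin n₂) ℂ)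
    (hA₁ : ∑ i, (A₁ i)ᴴ * A₁ i = 1) (hA₂ : ∑ i, (A₂ i)ᴴ * A₂ i = 1) :
    opNorm (fun X : Matrix (Fin n₁ × Fin n₂) (Fin n₁ × Fin n₂) ℂ =>
        ∑ i : Fin l₁ × Fin l₂, (A₁ i.1 ⊗ₖ A₂ i.2) * X * (A₁ i.1 ⊗ₖ A₂ i.2)ᴴ) =
      opNorm (fun X : Matrix (Fin n₁) (Fin n₁) ℂ => ∑ i, A₁ i * X * (A₁ i)ᴴ) *
        opNorm (fun X : Matrix (Fin n₂) (Fin n₂) ℂ => ∑ i, A₂ i * X * (A₂ i)ᴴ) := by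
  have h1 : (fun X : Matrix (Fin n₁ × Fin n₂) (Fin n₁ × Fin n₂) ℂ =>
      ∑ i : Fin l₁ × Fin l₂, (A₁ i.1 ⊗ₖ A₂ i.2) * X * (A₁ i.1 ⊗ₖ A₂ i.2)ᴴ) =
      kchan (fun p : Fin l₁ × Fin l₂ => A₁ p.1 ⊗ₖ A₂ p.2) := rfl
  have h2 : (fun X : Matrix (Fin n₁) (Fin n₁) ℂ => ∑ i, A₁ i * X * (A₁ i)ᴴ) = kchan A₁ := rfl
  have h3 : (fun X : Matrix (Fin n₂) (Fin n₂) ℂ => ∑ i, A₂ i * X * (A₂ i)ᴴ) = kchan A₂ := rfl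
  rw [h1, h2, h3]
  exact le_antisymm (opNorm_kron_le A₁ A₂) (opNorm_kron_ge A₁ A₂)
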